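/- arXiv:1506.05155 — 9 statements merged into one kernel-verified Lean document; each statement's English description precedes it below -/
import Mathlib

section
/- Let H be a Hilbert space, D a dense subspace of H, and N a finite-dimensional subspace of H. Then D ∩ N^⊥ is dense in N^⊥ (where N^⊥ denotes the orthogonal complement of N). -/
open scoped InnerProductSpace

/-- If `D` is a dense subspace of a Hilbert space `H` and `N` a
finite-dimensional subspace, then `D ∩ Nᗮ` is dense in `Nᗮ`. -/
theorem dense_inter_orthogonal_of_finiteDimensional
    {H : Type*} [NormedAddCommGroup H] [InnerProductSpace ℂ H] [CompleteSpace H]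
    (D N : Submodule ℂ H) (hD : Dense (D : Set H)) [FiniteDimensional ℂ N] :
    ∀ x ∈ Nᗮ, x ∈ closure ((D : Set H) ∩ (Nᗮ : Set H)) := by
  intro x hx
  set Q : H →L[ℂ] N := N.orthogonalProjectionOnto with hQdef
  have hQsurj : Function.Surjective Q := fun y => ⟨(y : H), by
    simp [hQdef]⟩
  -- Q maps D onto a dense submodule of N, which by finite-dimensionality is all of N.
  have hQD : D.map (Q : H →ₗ[ℂ] N) = ⊤ := by
    have hclosed : IsClosed ((D.map (Q : H →ₗ[ℂ] N) : Set N)) :=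
      Submodule.closed_of_finiteDimensional _
    have hdense : Dense ((D.map (Q : H →ₗ[ℂ] N) : Set N)) := by
      have h1 : Dense (Q '' (D : Set H)) :=
        hQsurj.denseRange.dense_image Q.continuous hD
      simpa [Submodule.map_coe] using h1
    have huniv : ((D.map (Q : H →ₗ[ℂ] N) : Set N)) = Set.univ := by
      rw [← hclosed.closure_eq, hdense.closure_eq]
    exact SetLike.coe_injective (by simp [huniv])
  -- choose a basis of N and preimages in D
  let b := Module.finBasis ℂ N
  have hchoose : ∀ i, ∃ d : H, d ∈ D ∧ Q d = b i := by
    intro i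
    have : b i ∈ D.map (Q : H →ₗ[ℂ] N) := hQD ▸ Submodule.mem_top
    obtain ⟨d, hd, hdq⟩ := this
    exact ⟨d, hd, hdq⟩
  choose d hdD hdQ using hchoose
  set S : N →ₗ[ℂ] H := b.constr ℂ d with hSdef
  have hSD : ∀ y, S y ∈ D := by
    intro y
    have hr : LinearMap.range S ≤ D := by
      rw [hSdef, Module.Basis.constr_range, Submodule.span_le]
      rintro _ ⟨i, rfl⟩
      exact hdD i
    exact hr ⟨y, rfl⟩
  have hQS : ∀ y : N, Q (S y) = y := by
    have hcomp : (Q : H →ₗ[ℂ] N).comp S = LinearMap.id := by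
      apply b.ext
      intro i
      simp [hSdef, hdQ i]
    intro y
    have := congrArg (fun f => f y) hcomp
    simpa using this
  have hScont : Continuous S := S.continuous_of_finiteDimensional
  -- the correcting map
  set f : H → H := fun y => y - S (Q y) with hfdef
  have hfcont : Continuous f := continuous_id.sub (hScont.comp Q.continuous)
  have hQx : Q x = 0 := Submodule.orthogonalProjectionOnto_eq_zero_iff.mpr hx
  have hfx : f x = x := by simp [hfdef, hQx]
  have hfD : f '' (D : Set H) ⊆ (D : Set H) ∩ (Nᗮ : Set H) := by
    rintro _ ⟨y, hy, rfl⟩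
    refine ⟨D.sub_mem hy (hSD _), ?_⟩
    have : Q (f y) = 0 := by simp [hfdef, hQS]
    exact Submodule.orthogonalProjectionOnto_eq_zero_iff.mp this
  have : x ∈ closure (f '' (D : Set H)) := by
    rw [← hfx]
    apply image_closure_subset_closure_image hfcont
    exact ⟨x, by rw [hD.closure_eq]; trivial, rfl⟩
  exact closure_mono hfD this
end

section
/- Under the assumptions of Section 2 (A symmetric with finite equal deficiency indices, B bounded selfadjoint with 0 ∈ σ_c(B), Π(L) ∩ ℝ ≠ ∅), the operator S defined by D(S) = {x ∈ D(A) : Ax ∈ R(|B|^{1/2})}, Sx = T⁻¹ J |B|^{-1/2} A x, is closed as an operator in the Krein space completion K of (H, ‖|B|^{1/2}·‖). -/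
open scoped InnerProductSpace
open Filter Topology

/-- Setting of Section 2: `A` symmetric densely defined (with finite equal
deficiency indices), `B = J∘Bh∘Bh` bounded selfadjoint with `0 ∈ σ_c(B)` (so
`Bh = |B|^{1/2}` is injective with dense, proper range), `J` the fundamental symmetry,
and `Π(L) ∩ ℝ ≠ ∅` (lower bound at a real `λ₀`).  The operator `S` with
`D(S) = {x ∈ D(A) : Ax ∈ R(Bh)}`, `T(Sx) = J Bh⁻¹ A x`, is closed in the Krein-space
completion `K` of `(H, ‖Bh·‖)`: identifying `K ≅ H` via the isometry `T`, whenever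
`xₙ ∈ D(S)` (with `Bh uₙ = A xₙ`, so `T(S xₙ) = J uₙ`), `Bh xₙ → x̃` and `J uₙ → ỹ`
in `H`, there exists `x₀ ∈ D(S)` with `Bh x₀ = x̃` and `T(S x₀) = ỹ`. -/
theorem reduction_operator_closed
    {H : Type*} [NormedAddCommGroup H] [InnerProductSpace ℂ H] [CompleteSpace H]
    (A : H →ₗ.[ℂ] H) (hAdense : Dense (A.domain : Set H)) (hAclosed : A.IsClosed)
    (hAsymm : ∀ x y : A.domain, ⟪A x, (y : H)⟫_ℂ = ⟪(x : H), A y⟫_ℂ)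
    (Bh J : H →L[ℂ] H)
    (hBh : IsSelfAdjoint Bh) (hBhpos : ∀ x : H, 0 ≤ (⟪Bh x, x⟫_ℂ).re)
    (hBhinj : Function.Injective Bh) (hBhrange : Dense (Set.range Bh))
    (hBhnotsurj : ¬ Function.Surjective Bh)
    (hJ : IsSelfAdjoint J) (hJ2 : J.comp J = ContinuousLinearMap.id ℂ H)
    (hJBh : J.comp Bh = Bh.comp J)
    (hB : IsSelfAdjoint (J.comp (Bh.comp Bh)))
    (lam₀ C₀ : ℝ) (hC₀ : 0 < C₀)
    (hlb : ∀ x : A.domain,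
      C₀ * ‖(x : H)‖ ≤ ‖A x - (lam₀ : ℂ) • (J.comp (Bh.comp Bh)) (x : H)‖) :
    ∀ (x : ℕ → A.domain) (u : ℕ → H), (∀ n, Bh (u n) = A (x n)) →
    ∀ xt yt : H,
      Tendsto (fun n => Bh ((x n : H))) atTop (nhds xt) →
      Tendsto (fun n => J (u n)) atTop (nhds yt) →
      ∃ (x₀ : A.domain) (u₀ : H), Bh u₀ = A x₀ ∧ Bh (x₀ : H) = xt ∧ J u₀ = yt := by
  intro x u hu xt yt hx hy
  have hJJ : ∀ z : H, J (J z) = z := fun z => by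
    have := ContinuousLinearMap.ext_iff.mp hJ2 z
    simpa using this
  have hu' : Tendsto (fun n => u n) atTop (nhds (J yt)) := by
    have h := (J.continuous.tendsto yt).comp hy
    have he : (⇑J ∘ fun n => J (u n)) = fun n => u n := funext fun n => hJJ _
    rwa [he] at h
  have hAx : Tendsto (fun n => A (x n)) atTop (nhds (Bh (J yt))) := by
    have h := (Bh.continuous.tendsto (J yt)).comp hu'
    have he : (⇑Bh ∘ fun n => u n) = fun n => A (x n) := funext fun n => hu n
    rwa [he] at h
  have hg : Tendsto (fun n => A (x n) - (lam₀ : ℂ) • (J.comp (Bh.comp Bh)) ((x n : H)))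
      atTop (nhds (Bh (J yt) - (lam₀ : ℂ) • J (Bh xt))) := by
    refine hAx.sub ?_
    have h1 : Tendsto (fun n => J (Bh (Bh ((x n : H))))) atTop (nhds (J (Bh xt))) :=
      (J.continuous.tendsto _).comp ((Bh.continuous.tendsto _).comp hx)
    simpa [ContinuousLinearMap.comp_apply] using h1.const_smul ((lam₀ : ℂ))
  have hgC : CauchySeq (fun n => A (x n) - (lam₀ : ℂ) • (J.comp (Bh.comp Bh)) ((x n : H))) :=
    hg.cauchySeq
  have hxC : CauchySeq (fun n => ((x n : H))) := by
    rw [Metric.cauchySeq_iff]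
    intro ε hε
    obtain ⟨N, hN⟩ := Metric.cauchySeq_iff.mp hgC (C₀ * ε) (by positivity)
    refine ⟨N, fun m hm n hn => ?_⟩
    have h2 : ‖(A (x m) - (lam₀ : ℂ) • (J.comp (Bh.comp Bh)) ((x m : H))) -
        (A (x n) - (lam₀ : ℂ) • (J.comp (Bh.comp Bh)) ((x n : H)))‖ < C₀ * ε := by
      have := hN m hm n hn; rwa [dist_eq_norm] at this
    have h3 : C₀ * ‖(x m : H) - (x n : H)‖ ≤
        ‖(A (x m) - (lam₀ : ℂ) • (J.comp (Bh.comp Bh)) ((x m : H))) -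
        (A (x n) - (lam₀ : ℂ) • (J.comp (Bh.comp Bh)) ((x n : H)))‖ := by
      have h4 := hlb (x m - x n)
      have hA : A (x m - x n) = A (x m) - A (x n) := A.map_sub _ _
      have hsub : ((x m - x n : A.domain) : H) = (x m : H) - (x n : H) := rfl
      rw [hA, hsub] at h4
      calc C₀ * ‖(x m : H) - (x n : H)‖
          ≤ ‖A (x m) - A (x n) - (lam₀ : ℂ) • (J.comp (Bh.comp Bh)) ((x m : H) - (x n : H))‖ := h4
        _ = _ := by rw [map_sub, smul_sub]; rw [sub_sub_sub_comm]
    rw [dist_eq_norm]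
    have := lt_of_le_of_lt h3 h2
    exact (mul_lt_mul_iff_right₀ hC₀).mp this
  obtain ⟨x₀, hx₀⟩ := cauchySeq_tendsto_of_complete hxC
  have hmem : (x₀, Bh (J yt)) ∈ A.graph := by
    have hcl : IsClosed (A.graph : Set (H × H)) := hAclosed
    refine hcl.mem_of_tendsto (hx₀.prodMk_nhds hAx)
      (Filter.Eventually.of_forall fun n => ?_)
    exact A.mem_graph (x n)
  obtain ⟨x₀', hx₀', hAx₀⟩ := A.mem_graph_iff.mp hmem
  refine ⟨x₀', J yt, ?_, ?_, hJJ yt⟩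
  · rw [hAx₀]
  · have h5 : Tendsto (fun n => Bh ((x n : H))) atTop (nhds (Bh (x₀' : H))) := by
      rw [hx₀']
      exact (Bh.continuous.tendsto _).comp hx₀
    exact tendsto_nhds_unique h5 hx
end

section
/- Under the assumptions of Section 2, the operator S (with D(S) = {x ∈ D(A) : Ax ∈ R(|B|^{1/2})}, Sx = T⁻¹J|B|^{-1/2}Ax) is the closure in the Krein space K of the operator B⁻¹A with domain {x ∈ D(A) : Ax ∈ R(B)}. -/
open scoped InnerProductSpace
open Filter Topology

/-- A dense subspace intersects a closed finite-codimensional subspace densely. -/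
lemma aux_dense_inter {H : Type*} [NormedAddCommGroup H] [NormedSpace ℂ H]
    (D M : Submodule ℂ H) (hD : Dense (D : Set H)) (hMc : IsClosed (M : Set H))
    (hfd : FiniteDimensional ℂ (H ⧸ M)) (m : H) (hm : m ∈ M) {ε : ℝ} (hε : 0 < ε) :
    ∃ q, q ∈ D ∧ q ∈ M ∧ ‖q - m‖ < ε := by
  haveI : IsClosed (M : Set H) := hMc
  haveI := hfd
  have hmk_cont : Continuous M.mkQ :=
    AddMonoidHomClass.continuous_of_bound M.mkQ 1 fun x => by
      simpa using Submodule.Quotient.norm_mk_le M x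
  set f : D →ₗ[ℂ] H ⧸ M := M.mkQ.comp D.subtype with hf
  have hrange : LinearMap.range f = ⊤ := by
    have h0 : LinearMap.range f = D.map M.mkQ := by
      rw [hf, LinearMap.range_comp, Submodule.range_subtype]
    have hdense : Dense ((D.map M.mkQ : Submodule ℂ (H ⧸ M)) : Set (H ⧸ M)) := by
      have h2 := image_closure_subset_closure_image (s := (D : Set H)) hmk_cont
      rw [hD.closure_eq, Set.image_univ,
        Set.range_eq_univ.2 (Submodule.mkQ_surjective M)] at h2
      rw [Submodule.map_coe]
      exact fun x => h2 (Set.mem_univ x)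
    have h3 : (D.map M.mkQ).topologicalClosure = D.map M.mkQ :=
      IsClosed.submodule_topologicalClosure_eq (Submodule.closed_of_finiteDimensional _)
    have h4 := Submodule.dense_iff_topologicalClosure_eq_top.1 hdense
    rw [h0, ← h3, h4]
  obtain ⟨σ₀, hσ₀⟩ := f.exists_rightInverse_of_surjective hrange
  set σ : (H ⧸ M) →ₗ[ℂ] H := D.subtype.comp σ₀ with hσ
  have hσcont : Continuous σ := σ.continuous_of_finiteDimensional
  obtain ⟨σ', hσ'eq⟩ : ∃ g : (H ⧸ M) →L[ℂ] H, ∀ w, g w = σ w ∧ g w ∈ D :=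
    ⟨⟨σ, hσcont⟩, fun w => ⟨rfl, (σ₀ w).2⟩⟩
  obtain ⟨c, hc0, hb⟩ : ∃ c : ℝ, 0 ≤ c ∧ ∀ w, ‖σ' w‖ ≤ c * ‖w‖ :=
    ⟨‖σ'‖, ContinuousLinearMap.opNorm_nonneg _, fun w => σ'.le_opNorm w⟩
  have hδ : 0 < ε / (1 + c) := by positivity
  obtain ⟨d, hdD, hdm⟩ : ∃ d ∈ (D : Set H), dist m d < ε / (1 + c) :=
    hD.exists_dist_lt m hδ
  set v : H ⧸ M := M.mkQ d with hv
  have h5 : M.mkQ (σ' v) = v := by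
    rw [(hσ'eq v).1]
    have := LinearMap.ext_iff.1 hσ₀ v
    simpa [hf, hσ] using this
  refine ⟨d - σ' v, ?_, ?_, ?_⟩
  · exact sub_mem hdD (hσ'eq v).2
  · have h6 : M.mkQ (d - σ' v) = 0 := by rw [map_sub, h5, hv, sub_self]
    exact (Submodule.Quotient.mk_eq_zero M).1 (by simpa using h6)
  · have hnv : ‖v‖ ≤ ‖d - m‖ := by
      have h7 : M.mkQ (d - m) = v := by
        have h8 : M.mkQ m = 0 := by
          simpa using (Submodule.Quotient.mk_eq_zero M).2 hm
        rw [map_sub, h8, sub_zero, hv]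
      calc ‖v‖ = ‖M.mkQ (d - m)‖ := by rw [h7]
        _ ≤ ‖d - m‖ := Submodule.Quotient.norm_mk_le M _
    have hdm' : ‖d - m‖ < ε / (1 + c) := by
      rw [dist_comm, dist_eq_norm] at hdm; exact hdm
    have hle : ‖d - σ' v - m‖ ≤ ‖d - m‖ + c * ‖v‖ := by
      calc ‖d - σ' v - m‖ = ‖(d - m) - σ' v‖ := by rw [sub_right_comm]
        _ ≤ ‖d - m‖ + ‖σ' v‖ := norm_sub_le _ _
        _ ≤ ‖d - m‖ + c * ‖v‖ := by gcongr; exact hb v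
    have hfin : ‖d - m‖ + c * ‖v‖ < ε := by
      have h7 : c * ‖v‖ ≤ c * ‖d - m‖ := by gcongr
      have h8 : (1 + c) * ‖d - m‖ < (1 + c) * (ε / (1 + c)) :=
        mul_lt_mul_of_pos_left hdm' (by positivity)
      rw [mul_div_cancel₀ _ (by positivity : (1:ℝ) + c ≠ 0)] at h8
      nlinarith
    linarith

/-- If `A` is closed and `A - Bc` is bounded below, then any sequence in the domain whose
`(A - Bc)`-image converges has a limit in the domain realizing the limit value. -/
lemma aux_limit {H : Type*} [NormedAddCommGroup H] [NormedSpace ℂ H] [CompleteSpace H]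
    (A : H →ₗ.[ℂ] H) (hAclosed : A.IsClosed) (Bc : H →L[ℂ] H) (C₀ : ℝ) (hC₀ : 0 < C₀)
    (hlb : ∀ x : A.domain, C₀ * ‖(x : H)‖ ≤ ‖A x - Bc (x : H)‖)
    (f : ℕ → A.domain) (v : H)
    (hv : Tendsto (fun n => A (f n) - Bc (f n : H)) atTop (𝓝 v)) :
    ∃ x : A.domain, A x - Bc (x : H) = v ∧
      Tendsto (fun n => (f n : H)) atTop (𝓝 (x : H)) := by
  have hcauchyE : CauchySeq (fun n => A (f n) - Bc (f n : H)) := hv.cauchySeq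
  have hcauchy : CauchySeq (fun n => (f n : H)) := by
    rw [Metric.cauchySeq_iff] at hcauchyE ⊢
    intro ε hε
    obtain ⟨N, hN⟩ := hcauchyE (C₀ * ε) (by positivity)
    refine ⟨N, fun n hn m hm => ?_⟩
    have h1 := hN n hn m hm
    have h2 := hlb (f n - f m)
    have h3 : ((f n - f m : A.domain) : H) = (f n : H) - (f m : H) := rfl
    rw [h3, A.map_sub, map_sub] at h2
    have heq : A (f n) - A (f m) - (Bc (f n : H) - Bc (f m : H))
        = A (f n) - Bc (f n : H) - (A (f m) - Bc (f m : H)) := by abel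
    rw [heq] at h2
    rw [dist_eq_norm] at h1 ⊢
    exact (mul_lt_mul_iff_right₀ hC₀).1 (lt_of_le_of_lt h2 h1)
  obtain ⟨z, hz⟩ := cauchySeq_tendsto_of_complete hcauchy
  have hAf : Tendsto (fun n => A (f n)) atTop (𝓝 (v + Bc z)) := by
    have h4 : Tendsto (fun n => Bc ((f n : H))) atTop (𝓝 (Bc z)) :=
      (Bc.continuous.tendsto z).comp hz
    have := hv.add h4
    simpa using this
  have hgraph : (z, v + Bc z) ∈ A.graph := by
    have hmem : ∀ n, ((f n : H), A (f n)) ∈ (A.graph : Set (H × H)) :=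
      fun n => A.mem_graph (f n)
    have htend : Tendsto (fun n => ((f n : H), A (f n))) atTop (𝓝 (z, v + Bc z)) :=
      hz.prodMk_nhds hAf
    exact hAclosed.mem_of_tendsto htend (Eventually.of_forall hmem)
  rw [LinearPMap.mem_graph_iff] at hgraph
  obtain ⟨x, hx1, hx2⟩ := hgraph
  refine ⟨x, ?_, by rw [hx1]; exact hz⟩
  rw [hx2, hx1]
  simp

/-- In the setting of Section 2 (`A` symmetric densely defined with the
standing assumptions, `B = J∘Bh∘Bh` bounded selfadjoint, `0 ∈ σ_c(B)`, `Π(L)∩ℝ ≠ ∅`),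
the operator `S` (`D(S) = {x ∈ D(A) : Ax ∈ R(Bh)}`, `T(Sx) = J Bh⁻¹ A x`) is the
closure in the Krein space `K` of `B⁻¹A` (domain `{x ∈ D(A) : Ax ∈ R(B)}`):
identifying `K ≅ H` via `T`, a pair `(x̃, ỹ)` lies in the graph of `S` iff it lies
in the `K`-closure of the graph of `B⁻¹A`. -/
theorem reduction_operator_is_closure
    {H : Type*} [NormedAddCommGroup H] [InnerProductSpace ℂ H] [CompleteSpace H]
    (A : H →ₗ.[ℂ] H) (hAdense : Dense (A.domain : Set H)) (hAclosed : A.IsClosed)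
    (hAsymm : ∀ x y : A.domain, ⟪A x, (y : H)⟫_ℂ = ⟪(x : H), A y⟫_ℂ)
    (Bh J : H →L[ℂ] H)
    (hBh : IsSelfAdjoint Bh) (hBhpos : ∀ x : H, 0 ≤ (⟪Bh x, x⟫_ℂ).re)
    (hBhinj : Function.Injective Bh) (hBhrange : Dense (Set.range Bh))
    (hBhnotsurj : ¬ Function.Surjective Bh)
    (hJ : IsSelfAdjoint J) (hJ2 : J.comp J = ContinuousLinearMap.id ℂ H)
    (hJBh : J.comp Bh = Bh.comp J)
    (hB : IsSelfAdjoint (J.comp (Bh.comp Bh)))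
    (lam₀ C₀ : ℝ) (hC₀ : 0 < C₀)
    (hlb : ∀ x : A.domain,
      C₀ * ‖(x : H)‖ ≤ ‖A x - (lam₀ : ℂ) • (J.comp (Bh.comp Bh)) (x : H)‖)
    (hcodim : FiniteDimensional ℂ
      (H ⧸ (LinearMap.range (A.toFun -
        (((lam₀ : ℂ) • (J.comp (Bh.comp Bh))).toLinearMap).comp
          A.domain.subtype)).topologicalClosure)) :
    ∀ xt yt : H,
      (∃ (x₀ : A.domain) (u₀ : H), Bh u₀ = A x₀ ∧ Bh (x₀ : H) = xt ∧ J u₀ = yt) ↔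
      (∀ ε : ℝ, 0 < ε → ∃ (z : A.domain) (y : H),
        (J.comp (Bh.comp Bh)) y = A z ∧ ‖Bh (z : H) - xt‖ < ε ∧ ‖Bh y - yt‖ < ε) := by
  classical
  set Bc : H →L[ℂ] H := J.comp (Bh.comp Bh) with hBcdef
  set Bc' : H →L[ℂ] H := (lam₀ : ℂ) • Bc with hBc'def
  set E : A.domain →ₗ[ℂ] H :=
    A.toFun - (Bc'.toLinearMap).comp A.domain.subtype with hEdef
  have hEapp : ∀ x : A.domain, E x = A x - Bc' (x : H) := fun x => rfl
  have hBcapp : ∀ w, Bc w = J (Bh (Bh w)) := fun w => rfl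
  have hBc'app : ∀ w, Bc' w = (lam₀ : ℂ) • Bc w := fun w => rfl
  have hJJ : ∀ w, J (J w) = w := fun w => by
    have := ContinuousLinearMap.ext_iff.1 hJ2 w
    simpa using this
  have hcomm : ∀ w, J (Bh w) = Bh (J w) := fun w => by
    have := ContinuousLinearMap.ext_iff.1 hJBh w
    simpa using this
  have hlbE : ∀ x : A.domain, C₀ * ‖(x : H)‖ ≤ ‖A x - Bc' (x : H)‖ := fun x => hlb x
  -- the range of `E = A - lam₀ B` is closed
  have hRclosed : IsClosed ((LinearMap.range E : Submodule ℂ H) : Set H) := by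
    apply isClosed_of_closure_subset
    intro v hv
    rw [mem_closure_iff_seq_limit] at hv
    obtain ⟨g, hg, hgl⟩ := hv
    have hg' : ∀ n, ∃ t : A.domain, E t = g n := fun n => LinearMap.mem_range.1 (hg n)
    choose x hx using hg'
    have hgeq : (fun n => A (x n) - Bc' ((x n : H))) = g :=
      funext fun n => (hEapp (x n)).symm.trans (hx n)
    have hv' : Tendsto (fun n => A (x n) - Bc' ((x n : H))) atTop (𝓝 v) := by
      rw [hgeq]; exact hgl
    obtain ⟨xL, hx1, _⟩ := aux_limit A hAclosed Bc' C₀ hC₀ hlbE x v hv'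
    exact LinearMap.mem_range.2 ⟨xL, (hEapp xL).trans hx1⟩
  have hRtc : (LinearMap.range E).topologicalClosure = LinearMap.range E :=
    IsClosed.submodule_topologicalClosure_eq hRclosed
  rw [hRtc] at hcodim
  intro xt yt
  constructor
  · -- graph of S is contained in the closure of the graph of B⁻¹A
    rintro ⟨x₀, u₀, hu, hxt, hyt⟩ ε hε
    set M : Submodule ℂ H := (LinearMap.range E).comap (Bh : H →ₗ[ℂ] H) with hMdef
    have hMmem : ∀ w, w ∈ M ↔ Bh w ∈ LinearMap.range E := fun w => by
      rw [hMdef]; simp [Submodule.mem_comap]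
    have hMclosed : IsClosed (M : Set H) := by
      have : (M : Set H) = ⇑Bh ⁻¹' ((LinearMap.range E : Submodule ℂ H) : Set H) := by
        ext w; simp [hMmem w]
      rw [this]
      exact hRclosed.preimage Bh.continuous
    haveI hMfd : FiniteDimensional ℂ (H ⧸ M) := by
      haveI := hcodim
      have hle : M ≤ (LinearMap.range E).comap (Bh : H →ₗ[ℂ] H) := le_rfl
      refine FiniteDimensional.of_injective
        (Submodule.mapQ M (LinearMap.range E) (Bh : H →ₗ[ℂ] H) hle) ?_
      intro a b hab
      obtain ⟨xa, rfl⟩ := Submodule.Quotient.mk_surjective M a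
      obtain ⟨xb, rfl⟩ := Submodule.Quotient.mk_surjective M b
      rw [Submodule.mapQ_apply, Submodule.mapQ_apply, Submodule.Quotient.eq] at hab
      rw [Submodule.Quotient.eq]
      rw [hMmem, map_sub]
      simpa using hab
    set D : Submodule ℂ H := LinearMap.range (Bh : H →ₗ[ℂ] H) with hDdef
    have hDset : (D : Set H) = Set.range Bh := by
      ext w; simp [hDdef, LinearMap.mem_range]
    have hD : Dense (D : Set H) := by rw [hDset]; exact hBhrange
    set q : H := u₀ - (lam₀ : ℂ) • J (Bh (x₀ : H)) with hqdef
    have hBhq : Bh q = A x₀ - Bc' (x₀ : H) := by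
      rw [hqdef, map_sub, map_smul, hu, hBc'app, hBcapp, ← hcomm (Bh (x₀ : H))]
    have hq : q ∈ M := (hMmem q).2 (LinearMap.mem_range.2 ⟨x₀, (hEapp x₀).trans hBhq.symm⟩)
    set Kc : ℝ := ‖J‖ + ‖Bh‖ * ‖Bh‖ / C₀ + |lam₀| * (‖Bh‖ * ‖Bh‖ / C₀) + 1 with hKc
    have hKpos : 0 < Kc := by rw [hKc]; positivity
    have hδ : 0 < ε / Kc := by positivity
    obtain ⟨q', hq'D, hq'M, hq'near⟩ := aux_dense_inter D M hD hMclosed hMfd q hq hδ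
    obtain ⟨p, hp⟩ := LinearMap.mem_range.1 (by rw [hDdef] at hq'D; exact hq'D)
    have hp' : Bh p = q' := hp
    obtain ⟨z, hz⟩ := LinearMap.mem_range.1 ((hMmem q').1 hq'M)
    refine ⟨z, J p + (lam₀ : ℂ) • (z : H), ?_, ?_, ?_⟩
    · -- Bc y = A z
      have h1 : Bc (J p) = Bh (Bh p) := by
        rw [hBcapp, ← hcomm p, ← hcomm (Bh p), hJJ]
      have h2 : Bc (J p + (lam₀ : ℂ) • (z : H))
          = Bc (J p) + (lam₀ : ℂ) • Bc (z : H) := by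
        rw [map_add, map_smul]
      rw [h2, h1, hp', ← hz, hEapp, hBc'app]
      abel
    · -- first norm estimate
      have hsub : ((z - x₀ : A.domain) : H) = (z : H) - (x₀ : H) := rfl
      have hdiff : A (z - x₀) - Bc' ((z - x₀ : A.domain) : H) = Bh (q' - q) := by
        calc A (z - x₀) - Bc' ((z - x₀ : A.domain) : H)
            = (A z - Bc' (z : H)) - (A x₀ - Bc' ((x₀ : H))) := by
              rw [A.map_sub, hsub, map_sub]; abel
          _ = Bh q' - Bh q := by rw [← hEapp z, hz, hBhq]
          _ = Bh (q' - q) := (map_sub _ _ _).symm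
      have h3 := hlbE (z - x₀)
      rw [hdiff] at h3
      have h4 : ‖Bh (q' - q)‖ ≤ ‖Bh‖ * ‖q' - q‖ := Bh.le_opNorm _
      have hzx : ‖(z : H) - (x₀ : H)‖ ≤ ‖Bh‖ * ‖q' - q‖ / C₀ := by
        rw [le_div_iff₀ hC₀, mul_comm]
        rw [hsub] at h3
        exact h3.trans h4
      have h5 : ‖Bh ((z : H)) - xt‖ ≤ ‖Bh‖ * ‖(z : H) - (x₀ : H)‖ := by
        rw [← hxt, ← map_sub]
        exact Bh.le_opNorm _
      have hnn : (0:ℝ) ≤ ‖q' - q‖ := norm_nonneg _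
      have hKbig : ‖Bh‖ * ‖Bh‖ / C₀ ≤ Kc := by
        rw [hKc]
        have hnn1 : (0:ℝ) ≤ ‖J‖ := norm_nonneg _
        have hnn2 : (0:ℝ) ≤ |lam₀| * (‖Bh‖ * ‖Bh‖ / C₀) := by positivity
        linarith
      have hKq : Kc * ‖q' - q‖ < ε := by
        have := mul_lt_mul_of_pos_left hq'near hKpos
        rwa [mul_div_cancel₀ _ (ne_of_gt hKpos)] at this
      calc ‖Bh ((z : H)) - xt‖ ≤ ‖Bh‖ * (‖Bh‖ * ‖q' - q‖ / C₀) := by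
            refine h5.trans ?_
            gcongr
        _ = (‖Bh‖ * ‖Bh‖ / C₀) * ‖q' - q‖ := by ring
        _ ≤ Kc * ‖q' - q‖ := by gcongr
        _ < ε := hKq
    · -- second norm estimate
      have hsub : ((z - x₀ : A.domain) : H) = (z : H) - (x₀ : H) := rfl
      have hdiff : A (z - x₀) - Bc' ((z - x₀ : A.domain) : H) = Bh (q' - q) := by
        calc A (z - x₀) - Bc' ((z - x₀ : A.domain) : H)
            = (A z - Bc' (z : H)) - (A x₀ - Bc' ((x₀ : H))) := by
              rw [A.map_sub, hsub, map_sub]; abel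
          _ = Bh q' - Bh q := by rw [← hEapp z, hz, hBhq]
          _ = Bh (q' - q) := (map_sub _ _ _).symm
      have h3 := hlbE (z - x₀)
      rw [hdiff, hsub] at h3
      have h4 : ‖Bh (q' - q)‖ ≤ ‖Bh‖ * ‖q' - q‖ := Bh.le_opNorm _
      have hzx : ‖(z : H) - (x₀ : H)‖ ≤ ‖Bh‖ * ‖q' - q‖ / C₀ := by
        rw [le_div_iff₀ hC₀, mul_comm]
        exact h3.trans h4
      -- Bh y - yt = J (q' - q) + lam₀ • Bh (z - x₀)
      have hkey : Bh (J p + (lam₀ : ℂ) • (z : H)) - yt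
          = J (q' - q) + (lam₀ : ℂ) • Bh ((z : H) - (x₀ : H)) := by
        have e2 : yt = J q + (lam₀ : ℂ) • Bh ((x₀ : H)) := by
          rw [← hyt, hqdef, map_sub, map_smul, hJJ]
          abel
        have e1 : Bh (J p + (lam₀ : ℂ) • (z : H)) = J q' + (lam₀ : ℂ) • Bh (z : H) := by
          rw [map_add, map_smul, ← hcomm p, hp']
        rw [e1, e2, map_sub J q' q, map_sub Bh ((z : H)) ((x₀ : H)),
          smul_sub ((lam₀ : ℂ)) (Bh ((z : H))) (Bh ((x₀ : H)))]
        abel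
      rw [hkey]
      have hb1 : ‖J (q' - q)‖ ≤ ‖J‖ * ‖q' - q‖ := J.le_opNorm _
      have hb2 : ‖(lam₀ : ℂ) • Bh ((z : H) - (x₀ : H))‖
          ≤ |lam₀| * (‖Bh‖ * ‖Bh‖ / C₀) * ‖q' - q‖ := by
        rw [norm_smul, Complex.norm_real, Real.norm_eq_abs]
        calc |lam₀| * ‖Bh ((z : H) - (x₀ : H))‖
            ≤ |lam₀| * (‖Bh‖ * ‖(z : H) - (x₀ : H)‖) := by
              gcongr
              exact Bh.le_opNorm _
          _ ≤ |lam₀| * (‖Bh‖ * (‖Bh‖ * ‖q' - q‖ / C₀)) := by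
              gcongr
          _ = |lam₀| * (‖Bh‖ * ‖Bh‖ / C₀) * ‖q' - q‖ := by ring
      have hKq : Kc * ‖q' - q‖ < ε := by
        have := mul_lt_mul_of_pos_left hq'near hKpos
        rwa [mul_div_cancel₀ _ (ne_of_gt hKpos)] at this
      calc ‖J (q' - q) + (lam₀ : ℂ) • Bh ((z : H) - (x₀ : H))‖
          ≤ ‖J (q' - q)‖ + ‖(lam₀ : ℂ) • Bh ((z : H) - (x₀ : H))‖ := norm_add_le _ _
        _ ≤ ‖J‖ * ‖q' - q‖ + |lam₀| * (‖Bh‖ * ‖Bh‖ / C₀) * ‖q' - q‖ := add_le_add hb1 hb2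
        _ = (‖J‖ + |lam₀| * (‖Bh‖ * ‖Bh‖ / C₀)) * ‖q' - q‖ := by ring
        _ ≤ Kc * ‖q' - q‖ := by
            have h9 : ‖J‖ + |lam₀| * (‖Bh‖ * ‖Bh‖ / C₀) ≤ Kc := by
              rw [hKc]
              have hnn1 : (0:ℝ) ≤ ‖Bh‖ * ‖Bh‖ / C₀ := by positivity
              linarith
            exact mul_le_mul_of_nonneg_right h9 (norm_nonneg _)
        _ < ε := hKq
  · -- closure of the graph of B⁻¹A is contained in the graph of S
    intro h
    choose zf yf hA1 hn1 hn2 using fun n : ℕ => h (1 / (n + 1 : ℝ)) (by positivity)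
    have htend0 : Tendsto (fun n : ℕ => 1 / (n + 1 : ℝ)) atTop (𝓝 0) :=
      tendsto_one_div_add_atTop_nhds_zero_nat
    have hzt : Tendsto (fun n => Bh ((zf n : H))) atTop (𝓝 xt) := by
      rw [tendsto_iff_norm_sub_tendsto_zero]
      exact squeeze_zero (fun n => norm_nonneg _) (fun n => (hn1 n).le) htend0
    have hyt' : Tendsto (fun n => Bh (yf n)) atTop (𝓝 yt) := by
      rw [tendsto_iff_norm_sub_tendsto_zero]
      exact squeeze_zero (fun n => norm_nonneg _) (fun n => (hn2 n).le) htend0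
    have hEzf : (fun n => A (zf n) - Bc' ((zf n : H)))
        = (fun n => (J.comp Bh) (Bh (yf n)) - (lam₀ : ℂ) • (J.comp Bh) (Bh ((zf n : H)))) := by
      funext n
      rw [← hA1 n]
      rfl
    have hvlim : Tendsto (fun n => A (zf n) - Bc' ((zf n : H))) atTop
        (𝓝 ((J.comp Bh) yt - (lam₀ : ℂ) • (J.comp Bh) xt)) := by
      rw [hEzf]
      have h1 : Tendsto (fun n => (J.comp Bh) (Bh (yf n))) atTop (𝓝 ((J.comp Bh) yt)) :=
        ((J.comp Bh).continuous.tendsto _).comp hyt'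
      have h2 : Tendsto (fun n => (J.comp Bh) (Bh ((zf n : H)))) atTop (𝓝 ((J.comp Bh) xt)) :=
        ((J.comp Bh).continuous.tendsto _).comp hzt
      exact h1.sub (h2.const_smul ((lam₀ : ℂ)))
    obtain ⟨xL, hxL, hlim⟩ := aux_limit A hAclosed Bc' C₀ hC₀ hlbE zf _ hvlim
    have hBhx : Bh ((xL : H)) = xt :=
      tendsto_nhds_unique ((Bh.continuous.tendsto _).comp hlim) hzt
    refine ⟨xL, J yt, ?_, hBhx, hJJ yt⟩
    have hAx : A xL = J (Bh yt) := by
      have h6 : Bc' ((xL : H)) = (lam₀ : ℂ) • J (Bh xt) := by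
        rw [hBc'app, hBcapp, hBhx]
      have h7 := hxL
      rw [h6] at h7
      have : A xL = (J.comp Bh) yt - (lam₀ : ℂ) • (J.comp Bh) xt + (lam₀ : ℂ) • J (Bh xt) := by
        rw [← h7]; abel
      simpa using this
    rw [hAx, hcomm]
end

section
/- Let à be a selfadjoint extension of A and S̃ the corresponding reduction operator in the Krein space K (D(S̃) = {x ∈ D(Ã) : Ãx ∈ R(|B|^{1/2})}). Then S̃ is unbounded; equivalently, if S̃ were bounded then R(|B|^{1/2}) = H, contradicting 0 ∈ σ_c(B). -/
open scoped InnerProductSpace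

private lemma cauchySeq_of_dom {E F : Type*} [NormedAddCommGroup E] [NormedAddCommGroup F]
    {u : ℕ → E} {w : ℕ → F} (K : ℝ)
    (h : ∀ m n, ‖u m - u n‖ ≤ K * ‖w m - w n‖) (hw : CauchySeq w) : CauchySeq u := by
  rw [Metric.cauchySeq_iff] at hw ⊢
  intro ε hε
  rcases le_or_gt K 0 with hK | hK
  · refine ⟨0, fun m _ n _ => ?_⟩
    have h1 := h m n
    have h2 : K * ‖w m - w n‖ ≤ 0 := mul_nonpos_of_nonpos_of_nonneg hK (norm_nonneg _)
    rw [dist_eq_norm]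
    linarith
  · obtain ⟨N, hN⟩ := hw (ε / K) (div_pos hε hK)
    refine ⟨N, fun m hm n hn => ?_⟩
    have h1 := h m n
    have h2 := hN m hm n hn
    rw [dist_eq_norm] at h2 ⊢
    calc ‖u m - u n‖ ≤ K * ‖w m - w n‖ := h1
      _ < K * (ε / K) := mul_lt_mul_of_pos_left h2 hK
      _ = ε := by field_simp

private lemma j_isom {H : Type*} [NormedAddCommGroup H] [InnerProductSpace ℂ H]
    [CompleteSpace H] (J : H →L[ℂ] H) (hJ : IsSelfAdjoint J)
    (hJ2 : J.comp J = ContinuousLinearMap.id ℂ H) (y : H) : ‖J y‖ = ‖y‖ := by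
  have h1 : J (J y) = y := by
    have := ContinuousLinearMap.ext_iff.mp hJ2 y
    simpa using this
  have h2 : ⟪J y, J y⟫_ℂ = ⟪y, y⟫_ℂ := by
    have h2' := hJ.isSymmetric y (J y)
    simp only [ContinuousLinearMap.coe_coe] at h2'
    rw [h1] at h2'
    exact h2'
  have h3 : ‖J y‖ ^ 2 = ‖y‖ ^ 2 := by
    rw [← @inner_self_eq_norm_sq ℂ, ← @inner_self_eq_norm_sq ℂ, h2]
  calc ‖J y‖ = √(‖J y‖ ^ 2) := (Real.sqrt_sq (norm_nonneg _)).symm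
    _ = √(‖y‖ ^ 2) := by rw [h3]
    _ = ‖y‖ := Real.sqrt_sq (norm_nonneg _)

/-- Let `Ã` be a selfadjoint extension of `A` (here: a densely defined
closed symmetric operator in the standing setting of Sections 2–3) and `S̃` the
corresponding reduction operator in the Krein space `K`
(`D(S̃) = {x ∈ D(Ã) : Ãx ∈ R(Bh)}`, `T(S̃x) = J Bh⁻¹ Ã x`).  Since `0 ∈ σ_c(B)`
(`Bh` injective with dense but proper range), `S̃` is unbounded: there is no constant
`C` with `‖S̃ x‖_K ≤ C ‖x‖_K` on `D(S̃)`. -/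
theorem reduction_operator_unbounded
    {H : Type*} [NormedAddCommGroup H] [InnerProductSpace ℂ H] [CompleteSpace H]
    (At : H →ₗ.[ℂ] H) (hAdense : Dense (At.domain : Set H)) (hAclosed : At.IsClosed)
    (hAsymm : ∀ x y : At.domain, ⟪At x, (y : H)⟫_ℂ = ⟪(x : H), At y⟫_ℂ)
    (Bh J : H →L[ℂ] H)
    (hBh : IsSelfAdjoint Bh) (hBhpos : ∀ x : H, 0 ≤ (⟪Bh x, x⟫_ℂ).re)
    (hBhinj : Function.Injective Bh) (hBhrange : Dense (Set.range Bh))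
    (hBhnotsurj : ¬ Function.Surjective Bh)
    (hJ : IsSelfAdjoint J) (hJ2 : J.comp J = ContinuousLinearMap.id ℂ H)
    (hJBh : J.comp Bh = Bh.comp J)
    (hB : IsSelfAdjoint (J.comp (Bh.comp Bh)))
    (lam₀ C₀ : ℝ) (hC₀ : 0 < C₀)
    (hlb : ∀ x : At.domain,
      C₀ * ‖(x : H)‖ ≤ ‖At x - (lam₀ : ℂ) • (J.comp (Bh.comp Bh)) (x : H)‖)
    (hcodim : FiniteDimensional ℂ
      (H ⧸ (LinearMap.range (At.toFun -
        (((lam₀ : ℂ) • (J.comp (Bh.comp Bh))).toLinearMap).comp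
          At.domain.subtype)).topologicalClosure)) :
    ¬ ∃ C : ℝ, ∀ (x : At.domain) (u : H), Bh u = At x → ‖J u‖ ≤ C * ‖Bh (x : H)‖ := by
  rintro ⟨C, hC⟩
  set Bop : H →L[ℂ] H := J.comp (Bh.comp Bh) with hBop
  set T : At.domain →ₗ[ℂ] H := At.toFun -
      (((lam₀ : ℂ) • Bop).toLinearMap).comp At.domain.subtype with hTdef
  have hTapp : ∀ x : At.domain, T x = At x - (lam₀ : ℂ) • Bop (x : H) := fun x => rfl
  have hlbT : ∀ x : At.domain, C₀ * ‖(x : H)‖ ≤ ‖T x‖ := by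
    intro x; rw [hTapp]; exact hlb x
  set F : Submodule ℂ H := (LinearMap.range T).topologicalClosure with hFdef
  -- range of T is closed
  have hclosed : IsClosed ((LinearMap.range T : Submodule ℂ H) : Set H) := by
    rw [← closure_subset_iff_isClosed]
    intro y hy
    obtain ⟨w, hw, hwy⟩ := mem_closure_iff_seq_limit.mp hy
    choose xn hxn using hw
    have hkey : ∀ m n, ‖(xn m : H) - (xn n : H)‖ ≤ C₀⁻¹ * ‖w m - w n‖ := by
      intro m n
      have h1 := hlbT (xn m - xn n)
      rw [map_sub, hxn, hxn] at h1
      have h2 : ((xn m - xn n : At.domain) : H) = (xn m : H) - (xn n : H) := rfl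
      rw [h2] at h1
      rw [inv_mul_eq_div, le_div_iff₀ hC₀]
      linarith
    have hcx : CauchySeq (fun n => (xn n : H)) :=
      cauchySeq_of_dom C₀⁻¹ hkey hwy.cauchySeq
    obtain ⟨x, hx⟩ := cauchySeq_tendsto_of_complete hcx
    set z : H := y + (lam₀ : ℂ) • Bop x with hz
    have hAxn : ∀ n, At (xn n) = w n + (lam₀ : ℂ) • Bop (xn n : H) := by
      intro n
      have hh := hTapp (xn n)
      rw [hxn] at hh
      rw [hh]; abel
    have htend : Filter.Tendsto (fun n => ((xn n : H), At (xn n))) Filter.atTop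
        (nhds (x, z)) := by
      refine Filter.Tendsto.prodMk_nhds hx ?_
      have h2 : Filter.Tendsto (fun n => w n + (lam₀ : ℂ) • Bop (xn n : H))
          Filter.atTop (nhds z) := by
        exact hwy.add (((Bop.continuous.tendsto x).comp hx).const_smul _)
      simpa only [hAxn] using h2
    have hmem : (x, z) ∈ At.graph := by
      refine hAclosed.mem_of_tendsto htend ?_
      exact Filter.Eventually.of_forall fun n => At.mem_graph _
    obtain ⟨x', hx'1, hx'2⟩ := At.mem_graph_iff.mp hmem
    refine ⟨x', ?_⟩
    rw [hTapp, hx'2]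
    simp only [hx'1, hz]
    abel
  have hFeq : F = LinearMap.range T := hclosed.submodule_topologicalClosure_eq
  -- key bound
  set K : ℝ := (max C 0 + |lam₀|) * ‖Bh‖ with hKdef
  have hK0 : 0 ≤ max C 0 + |lam₀| := add_nonneg (le_max_right _ _) (abs_nonneg _)
  set C' : ℝ := K / C₀ with hC'def
  have hstar : ∀ (v : H) (x : At.domain), Bh v = T x → ‖v‖ ≤ C' * ‖Bh v‖ := by
    intro v x hvx
    set u : H := v + (lam₀ : ℂ) • (J (Bh (x : H))) with hu
    have hBu : Bh u = At x := by
      have h1 : Bh (J (Bh (x : H))) = J (Bh (Bh (x : H))) := by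
        have := ContinuousLinearMap.ext_iff.mp hJBh (Bh (x : H))
        simpa using this.symm
      have h2 : Bop (x : H) = J (Bh (Bh (x : H))) := rfl
      rw [hu, map_add, map_smul, h1, hvx, hTapp, h2]
      abel
    have h2 := hC x u hBu
    have hiso := fun y => j_isom J hJ hJ2 y
    have h3 : ‖u‖ ≤ max C 0 * ‖Bh (x : H)‖ := by
      rw [← hiso u]
      calc ‖J u‖ ≤ C * ‖Bh (x : H)‖ := h2
        _ ≤ max C 0 * ‖Bh (x : H)‖ :=
          mul_le_mul_of_nonneg_right (le_max_left _ _) (norm_nonneg _)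
    have h4 : ‖v‖ ≤ (max C 0 + |lam₀|) * ‖Bh (x : H)‖ := by
      have hveq : v = u - (lam₀ : ℂ) • J (Bh (x : H)) := by rw [hu]; abel
      calc ‖v‖ ≤ ‖u‖ + ‖(lam₀ : ℂ) • J (Bh (x : H))‖ := by
            rw [hveq]; exact norm_sub_le _ _
        _ = ‖u‖ + |lam₀| * ‖Bh (x : H)‖ := by
            rw [norm_smul, hiso]; norm_num
        _ ≤ (max C 0 + |lam₀|) * ‖Bh (x : H)‖ := by nlinarith [norm_nonneg (Bh (x : H))]
    have h5 : ‖Bh (x : H)‖ ≤ ‖Bh‖ * ‖(x : H)‖ := Bh.le_opNorm _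
    have hx : C₀ * ‖(x : H)‖ ≤ ‖Bh v‖ := by rw [hvx]; exact hlbT x
    have step : C₀ * ‖v‖ ≤ K * ‖Bh v‖ := by
      have s1 : C₀ * ‖v‖ ≤ C₀ * ((max C 0 + |lam₀|) * ‖Bh (x : H)‖) :=
        mul_le_mul_of_nonneg_left h4 hC₀.le
      have s2 : C₀ * ((max C 0 + |lam₀|) * ‖Bh (x : H)‖)
          ≤ C₀ * ((max C 0 + |lam₀|) * (‖Bh‖ * ‖(x : H)‖)) := by
        refine mul_le_mul_of_nonneg_left (mul_le_mul_of_nonneg_left h5 hK0) hC₀.le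
      have s3 : C₀ * ((max C 0 + |lam₀|) * (‖Bh‖ * ‖(x : H)‖))
          = (max C 0 + |lam₀|) * ‖Bh‖ * (C₀ * ‖(x : H)‖) := by ring
      have s4 : (max C 0 + |lam₀|) * ‖Bh‖ * (C₀ * ‖(x : H)‖)
          ≤ (max C 0 + |lam₀|) * ‖Bh‖ * ‖Bh v‖ :=
        mul_le_mul_of_nonneg_left hx (mul_nonneg hK0 (norm_nonneg _))
      calc C₀ * ‖v‖ ≤ _ := s1
        _ ≤ _ := s2
        _ = _ := s3
        _ ≤ K * ‖Bh v‖ := s4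
    rw [hC'def, div_mul_eq_mul_div, le_div_iff₀ hC₀]
    linarith
  -- orthogonal complement setup
  have hFclosed : IsClosed (F : Set H) := Submodule.isClosed_topologicalClosure _
  haveI : CompleteSpace F := hFclosed.completeSpace_coe
  have hcompl : IsCompl F Fᗮ := Submodule.isCompl_orthogonal_of_hasOrthogonalProjection
  haveI : FiniteDimensional ℂ (H ⧸ F) := hcodim
  haveI hfd : FiniteDimensional ℂ Fᗮ :=
    LinearEquiv.finiteDimensional (F.quotientEquivOfIsCompl Fᗮ hcompl)
  set π : H →L[ℂ] Fᗮ := Submodule.orthogonalProjectionOnto Fᗮ with hπdef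
  have hker : ∀ y : H, π y = 0 ↔ y ∈ F := by
    intro y
    rw [hπdef, Submodule.orthogonalProjectionOnto_eq_zero_iff, Submodule.orthogonal_orthogonal]
  have hπs : Function.Surjective π := by
    intro g
    exact ⟨g, Submodule.orthogonalProjectionOnto_mem_subspace_eq_self g⟩
  -- π ∘ Bh has dense, hence full, range in Fᗮ
  set S : Submodule ℂ Fᗮ := LinearMap.range ((π : H →ₗ[ℂ] Fᗮ) ∘ₗ (Bh : H →ₗ[ℂ] H)) with hSdef
  have hSdense : Dense (S : Set Fᗮ) := by
    have h1 : DenseRange ((π : H → Fᗮ) ∘ (Bh : H → H)) :=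
      DenseRange.comp hπs.denseRange hBhrange π.continuous
    have h2 : (S : Set Fᗮ) = Set.range ((π : H → Fᗮ) ∘ (Bh : H → H)) := by
      rw [hSdef, LinearMap.coe_range]
      rfl
    rw [h2]; exact h1
  have hSclosed : IsClosed (S : Set Fᗮ) := S.closed_of_finiteDimensional
  have hStop : ∀ g : Fᗮ, ∃ a : H, π (Bh a) = g := by
    intro g
    have : g ∈ closure (S : Set Fᗮ) := hSdense g
    rw [hSclosed.closure_eq] at this
    obtain ⟨a, ha⟩ := this
    exact ⟨a, ha⟩
  -- build continuous right inverse with range in range Bh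
  set b := Module.Basis.ofVectorSpace ℂ Fᗮ with hbdef
  have hchoice : ∀ i, ∃ a : H, π (Bh a) = b i := fun i => hStop (b i)
  choose a ha using hchoice
  set Lpre : Fᗮ →ₗ[ℂ] H := b.constr ℂ a with hLdef
  have hLcont : Continuous Lpre := Lpre.continuous_of_finiteDimensional
  have hπL : ∀ g : Fᗮ, π (Bh (Lpre g)) = g := by
    have hcb : ∀ i, Lpre (b i) = a i := fun i => b.constr_basis ℂ a i
    have hId : ((π : H →ₗ[ℂ] Fᗮ) ∘ₗ ((Bh : H →ₗ[ℂ] H) ∘ₗ Lpre)) = LinearMap.id := by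
      refine b.ext fun i => ?_
      simp only [LinearMap.coe_comp, Function.comp_apply, ContinuousLinearMap.coe_coe,
        LinearMap.id_coe, id_eq, hcb]
      exact ha i
    intro g
    exact LinearMap.ext_iff.mp hId g
  -- every element of F is in the range of Bh
  have hFD : ∀ f ∈ F, f ∈ Set.range Bh := by
    intro f hf
    obtain ⟨dseq, hdseq, hdlim⟩ := mem_closure_iff_seq_limit.mp (hBhrange f)
    set w : ℕ → H := fun n => dseq n - Bh (Lpre (π (dseq n))) with hwdef
    have hwF : ∀ n, w n ∈ F := by
      intro n
      refine (hker _).mp ?_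
      rw [hwdef]
      simp only [map_sub, hπL]
      exact sub_self _
    have hwD : ∀ n, ∃ v, Bh v = w n := by
      intro n
      obtain ⟨aa, haa⟩ := hdseq n
      exact ⟨aa - Lpre (π (dseq n)), by rw [map_sub, haa]⟩
    choose v hv using hwD
    have hwT : ∀ n, ∃ x : At.domain, T x = w n := by
      intro n
      have : w n ∈ LinearMap.range T := hFeq ▸ hwF n
      exact this
    have hwlim : Filter.Tendsto w Filter.atTop (nhds f) := by
      have hcont : Continuous (fun y : H => y - Bh (Lpre (π y))) :=
        continuous_id.sub (Bh.continuous.comp (hLcont.comp π.continuous))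
      have h1 : Filter.Tendsto (fun n => dseq n - Bh (Lpre (π (dseq n)))) Filter.atTop
          (nhds (f - Bh (Lpre (π f)))) := (hcont.tendsto f).comp hdlim
      have h2 : π f = 0 := (hker f).mpr hf
      rw [h2] at h1
      simpa using h1
    have hvC : CauchySeq v := by
      refine cauchySeq_of_dom C' ?_ hwlim.cauchySeq
      intro m n
      obtain ⟨xm, hxm⟩ := hwT m
      obtain ⟨xn', hxn'⟩ := hwT n
      have hq : Bh (v m - v n) = T (xm - xn') := by
        rw [map_sub, hv, hv, map_sub, hxm, hxn']
      have := hstar (v m - v n) (xm - xn') hq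
      rw [hq] at this
      calc ‖v m - v n‖ ≤ C' * ‖T (xm - xn')‖ := this
        _ = C' * ‖w m - w n‖ := by rw [map_sub, hxm, hxn']
    obtain ⟨vl, hvl⟩ := cauchySeq_tendsto_of_complete hvC
    refine ⟨vl, ?_⟩
    have h1 : Filter.Tendsto (fun n => Bh (v n)) Filter.atTop (nhds (Bh vl)) :=
      (Bh.continuous.tendsto vl).comp hvl
    have h2 : (fun n => Bh (v n)) = w := funext hv
    rw [h2] at h1
    exact tendsto_nhds_unique h1 hwlim
  -- conclude Bh surjective, contradiction
  apply hBhnotsurj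
  intro y
  obtain ⟨aa, haa⟩ := hStop (π y)
  have hyd : y - Bh aa ∈ F := by
    refine (hker _).mp ?_
    rw [map_sub, haa, sub_self]
  obtain ⟨v1, hv1⟩ := hFD _ hyd
  refine ⟨v1 + aa, ?_⟩
  rw [map_add, hv1]
  abel
end

section
/- If H is a Hilbert space and B a bounded selfadjoint injective operator such that every Cauchy sequence (xₙ) in the norm ‖|B|^{1/2}·‖ has a limit in H (i.e. there is x with |B|^{1/2}xₙ → |B|^{1/2}x), then R(|B|^{1/2}) = H, and hence B is boundedly invertible. -/
open scoped InnerProductSpace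
open Filter Topology

/-- If `B` is a bounded selfadjoint injective operator on a Hilbert
space `H` and `Bh = |B|^{1/2}` (characterized by: selfadjoint, positive, `Bh⁴ = B²`)
is such that every Cauchy sequence for the norm `‖Bh·‖` has a limit in `H`, then
`R(Bh) = H` and `B` is boundedly invertible. -/
theorem surjective_of_complete_in_weak_norm
    {H : Type*} [NormedAddCommGroup H] [InnerProductSpace ℂ H] [CompleteSpace H]
    (B Bh : H →L[ℂ] H) (hB : IsSelfAdjoint B) (hBinj : Function.Injective B)
    (hBh : IsSelfAdjoint Bh) (hBhpos : ∀ x : H, 0 ≤ (⟪Bh x, x⟫_ℂ).re)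
    (hBh4 : (Bh * Bh) * (Bh * Bh) = B * B)
    (hcomplete : ∀ x : ℕ → H, CauchySeq (fun n => Bh (x n)) →
      ∃ y : H, Tendsto (fun n => Bh (x n)) atTop (nhds (Bh y))) :
    Function.Surjective Bh ∧
      ∃ Binv : H →L[ℂ] H, Binv.comp B = ContinuousLinearMap.id ℂ H ∧
        B.comp Binv = ContinuousLinearMap.id ℂ H := by
  have h4 : ∀ x : H, B (B x) = Bh (Bh (Bh (Bh x))) := by
    intro x
    have := congrArg (fun T : H →L[ℂ] H => T x) hBh4
    simpa [ContinuousLinearMap.mul_apply] using this.symm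
  -- Bh is injective
  have hBhinj : Function.Injective Bh := by
    intro a b hab
    have : B (B a) = B (B b) := by rw [h4, h4, hab]
    exact hBinj (hBinj this)
  -- The range of Bh is dense
  have hdense : Dense (Set.range Bh : Set H) := by
    have htop : (LinearMap.range (Bh : H →ₗ[ℂ] H)).topologicalClosure = ⊤ := by
      rw [Submodule.topologicalClosure_eq_top_iff, Submodule.eq_bot_iff]
      intro v hv
      have h0 : Bh v = 0 := by
        have h1 := hv (Bh (Bh v)) (LinearMap.mem_range.2 ⟨Bh v, rfl⟩)
        have h2 : ⟪Bh (Bh v), v⟫_ℂ = ⟪Bh v, Bh v⟫_ℂ := hBh.isSymmetric (Bh v) v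
        have : ⟪Bh v, Bh v⟫_ℂ = 0 := by rw [← h2, h1]
        exact inner_self_eq_zero.1 this
      have : Bh v = Bh 0 := by simpa using h0
      exact hBhinj this
    have : Dense ((LinearMap.range (Bh : H →ₗ[ℂ] H) : Submodule ℂ H) : Set H) := by
      rw [← Submodule.dense_iff_topologicalClosure_eq_top] at htop
      exact htop
    simpa [LinearMap.coe_range] using this
  -- Bh is surjective
  have hBhsurj : Function.Surjective Bh := by
    intro z
    obtain ⟨u, hu_mem, hu_lim⟩ := mem_closure_iff_seq_limit.1 (hdense z)
    choose x hx using hu_mem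
    have hx' : (fun n => Bh (x n)) = u := funext hx
    obtain ⟨y, hy⟩ := hcomplete x (by rw [hx']; exact hu_lim.cauchySeq)
    exact ⟨y, tendsto_nhds_unique hy (hx' ▸ hu_lim)⟩
  -- B is surjective
  have hBsurj : Function.Surjective B := by
    intro z
    obtain ⟨w1, hw1⟩ := hBhsurj z
    obtain ⟨w2, hw2⟩ := hBhsurj w1
    obtain ⟨w3, hw3⟩ := hBhsurj w2
    obtain ⟨w4, hw4⟩ := hBhsurj w3
    refine ⟨B w4, ?_⟩
    rw [h4, hw4, hw3, hw2, hw1]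
  refine ⟨hBhsurj, ?_⟩
  let e := ContinuousLinearEquiv.ofBijective B
    (LinearMap.ker_eq_bot.2 hBinj) (LinearMap.range_eq_top.2 hBsurj)
  refine ⟨(e.symm : H →L[ℂ] H), ?_, ?_⟩
  · ext x
    have : e x = B x := rfl
    simp [ContinuousLinearMap.comp_apply, ← this, ContinuousLinearEquiv.symm_apply_apply]
  · ext x
    have : ∀ y, e y = B y := fun _ => rfl
    simp [ContinuousLinearMap.comp_apply, ← this, ContinuousLinearEquiv.apply_symm_apply]
end

section
/- Let à be a selfadjoint extension of A and S̃ the corresponding reduction operator. Then λ is an eigenvalue of the pencil L̃(λ) = à − λB (i.e. Ãx = λBx for some x ≠ 0) if and only if λ is an eigenvalue of S̃, with the same eigenvectors. -/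
open scoped InnerProductSpace

/-- Let `Ã` be a selfadjoint extension of `A` (in the standing setting
of Sections 2–3, with `B = J∘Bh∘Bh`, `Bh = |B|^{1/2}` injective) and `S̃` the
reduction operator (`T(S̃x) = J Bh⁻¹ Ã x` on `D(S̃) = {x ∈ D(Ã) : Ãx ∈ R(Bh)}`).
Then `λ` is an eigenvalue of the pencil `L̃(λ) = Ã − λB` with eigenvector `x ≠ 0`
iff `λ` is an eigenvalue of `S̃` with the same eigenvector `x`
(`S̃ x = λ x` reads `∃ u, Bh u = Ã x ∧ J u = λ • Bh x`). -/
theorem pencil_eigenvalue_iff_reduction_eigenvalue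
    {H : Type*} [NormedAddCommGroup H] [InnerProductSpace ℂ H] [CompleteSpace H]
    (At : H →ₗ.[ℂ] H) (hAdense : Dense (At.domain : Set H)) (hAclosed : At.IsClosed)
    (hAsymm : ∀ x y : At.domain, ⟪At x, (y : H)⟫_ℂ = ⟪(x : H), At y⟫_ℂ)
    (Bh J : H →L[ℂ] H)
    (hBh : IsSelfAdjoint Bh) (hBhpos : ∀ x : H, 0 ≤ (⟪Bh x, x⟫_ℂ).re)
    (hBhinj : Function.Injective Bh) (hBhrange : Dense (Set.range Bh))
    (hJ : IsSelfAdjoint J) (hJ2 : J.comp J = ContinuousLinearMap.id ℂ H)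
    (hJBh : J.comp Bh = Bh.comp J)
    (hB : IsSelfAdjoint (J.comp (Bh.comp Bh))) :
    ∀ (lam : ℂ) (x : At.domain), (x : H) ≠ 0 →
      (At x = lam • (J.comp (Bh.comp Bh)) (x : H) ↔
        ∃ u : H, Bh u = At x ∧ J u = lam • Bh (x : H)) := by
  intro lam x hx
  have hJ2' : ∀ v : H, J (J v) = v := fun v => by
    simpa using ContinuousLinearMap.ext_iff.1 hJ2 v
  have hJBh' : ∀ v : H, J (Bh v) = Bh (J v) := fun v => by
    simpa using ContinuousLinearMap.ext_iff.1 hJBh v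
  constructor
  · intro h
    refine ⟨lam • J (Bh (x : H)), ?_, ?_⟩
    · rw [h]
      simp [map_smul, ← hJBh']
    · simp [map_smul, hJ2']
  · rintro ⟨u, hu1, hu2⟩
    have : u = lam • J (Bh (x : H)) := by
      have := congrArg J hu2
      rw [hJ2'] at this
      simpa [map_smul] using this
    rw [this] at hu1
    rw [← hu1]
    simp [map_smul, ← hJBh']
end

section
/- In the setting of Section 3, the resolvent sets correspond: ρ(S̃) = ρ(L̃), where ρ(L̃) = {λ : (Ã − λB)⁻¹ exists as a bounded everywhere-defined operator}. In particular σ(S̃) = σ(L̃). Key step: if λ ∈ ρ(S̃) then R(Ã − λB) ⊇ R(B), and if μ ∈ ρ(L̃) then R(Ã − λB) ⊇ R(Ã − μB) = H. -/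
open scoped InnerProductSpace

/-- In the setting of Section 3 (`Ã` a selfadjoint extension with
`ρ(L̃) ≠ ∅`, `B = J∘Bh∘Bh` bounded selfadjoint with `0 ∈ σ_c(B)`, `S̃` the reduction
operator in the Krein completion `K ≅ H` via `T`): `ρ(S̃) = ρ(L̃)`, hence
`σ(S̃) = σ(L̃)`.  Here `λ ∈ ρ(L̃)` means `(Ã − λB)⁻¹` exists bounded and everywhere
defined, and `λ ∈ ρ(S̃)` means `(S̃ − λ)⁻¹` exists bounded and everywhere defined
on `K` (expressed in the `T`-coordinates). -/
theorem resolvent_sets_coincide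
    {H : Type*} [NormedAddCommGroup H] [InnerProductSpace ℂ H] [CompleteSpace H]
    (At : H →ₗ.[ℂ] H) (hAdense : Dense (At.domain : Set H)) (hAclosed : At.IsClosed)
    (hAsa : At.adjoint = At)
    (Bh J : H →L[ℂ] H)
    (hBh : IsSelfAdjoint Bh) (hBhpos : ∀ x : H, 0 ≤ (⟪Bh x, x⟫_ℂ).re)
    (hBhinj : Function.Injective Bh) (hBhrange : Dense (Set.range Bh))
    (hBhnotsurj : ¬ Function.Surjective Bh)
    (hJ : IsSelfAdjoint J) (hJ2 : J.comp J = ContinuousLinearMap.id ℂ H)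
    (hJBh : J.comp Bh = Bh.comp J)
    (hB : IsSelfAdjoint (J.comp (Bh.comp Bh)))
    (hres : ∃ mu : ℂ, ∃ R : H →L[ℂ] H,
      (∀ x : At.domain, R (At x - mu • (J.comp (Bh.comp Bh)) (x : H)) = (x : H)) ∧
      (∀ y : H, ∃ x : At.domain, At x - mu • (J.comp (Bh.comp Bh)) (x : H) = y)) :
    ∀ lam : ℂ,
      ((∃ Q : H →L[ℂ] H,
        (∀ (x : At.domain) (u : H), Bh u = At x →
          Q (J u - lam • Bh (x : H)) = Bh (x : H)) ∧
        (∀ yt : H, ∃ (x : At.domain) (u : H), Bh u = At x ∧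
          J u - lam • Bh (x : H) = yt)) ↔
      (∃ R : H →L[ℂ] H,
        (∀ x : At.domain, R (At x - lam • (J.comp (Bh.comp Bh)) (x : H)) = (x : H)) ∧
        (∀ y : H, ∃ x : At.domain, At x - lam • (J.comp (Bh.comp Bh)) (x : H) = y))) := by

  classical
  obtain ⟨mu, Rmu, hRmu, hmuSurj⟩ := hres
  intro lam
  set B : H →L[ℂ] H := J.comp (Bh.comp Bh) with hBdef
  have hJBh' : ∀ v : H, J (Bh v) = Bh (J v) := fun v => DFunLike.congr_fun hJBh v
  have hJ2' : ∀ v : H, J (J v) = v := fun v => DFunLike.congr_fun hJ2 v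
  have hBapp : ∀ v : H, B v = J (Bh (Bh v)) := fun v => rfl
  have hkey : ∀ (x : At.domain) (u : H), Bh u = At x →
      J (Bh (J u - lam • Bh (x : H))) = At x - lam • B (x : H) := by
    intro x u hu
    rw [map_sub, map_smul, map_sub, map_smul, hJBh' (J u), hJ2' u, hu, hBapp]
  constructor
  · rintro ⟨Q, hQ, hQsurj⟩
    -- injectivity of At - lam • B on the domain
    have hinj : ∀ x : At.domain, At x - lam • B (x : H) = 0 → (x : H) = 0 := by
      intro x hx
      have hAx : At x = lam • B (x : H) := by
        have := sub_eq_zero.mp hx; exact this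
      have hu : Bh (lam • J (Bh (x : H))) = At x := by
        rw [map_smul, ← hJBh' (Bh (x : H)), ← hBapp, ← hAx]
      have h0 : J (lam • J (Bh (x : H))) - lam • Bh (x : H) = 0 := by
        rw [map_smul, hJ2', sub_self]
      have := hQ x (lam • J (Bh (x : H))) hu
      rw [h0, map_zero] at this
      exact hBhinj (by rw [← this, map_zero])
    -- surjectivity of At - lam • B
    have hsurj : ∀ y : H, ∃ x : At.domain, At x - lam • B (x : H) = y := by
      intro y
      obtain ⟨x0, hx0⟩ := hmuSurj y
      obtain ⟨x1, u, hu, heq⟩ := hQsurj ((lam - mu) • Bh (x0 : H))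
      have h1 : At x1 - lam • B (x1 : H) = (lam - mu) • B (x0 : H) := by
        have := hkey x1 u hu
        rw [heq] at this
        rw [← this, map_smul, map_smul, hBapp]
      refine ⟨x0 + x1, ?_⟩
      have hadd : At (x0 + x1) = At x0 + At x1 := At.map_add x0 x1
      have hcoe : ((x0 + x1 : At.domain) : H) = (x0 : H) + (x1 : H) := rfl
      rw [hadd, hcoe, map_add, smul_add]
      calc At x0 + At x1 - (lam • B (x0 : H) + lam • B (x1 : H))
          = (At x0 - lam • B (x0 : H)) + (At x1 - lam • B (x1 : H)) := by abel
        _ = (At x0 - lam • B (x0 : H)) + (lam - mu) • B (x0 : H) := by rw [h1]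
        _ = At x0 - mu • B (x0 : H) := by rw [sub_smul]; abel
        _ = y := hx0
    -- the operator C = I - (lam - mu) • (B ∘ Rmu)
    set C : H →L[ℂ] H :=
      ContinuousLinearMap.id ℂ H - (lam - mu) • (B.comp Rmu) with hCdef
    have hCapp : ∀ v : H, C v = v - (lam - mu) • B (Rmu v) := by
      intro v; simp [hCdef]
    have hCx : ∀ x : At.domain,
        C (At x - mu • B (x : H)) = At x - lam • B (x : H) := by
      intro x
      rw [hCapp, hRmu x, sub_smul]
      abel
    have hker : LinearMap.ker (C : H →ₗ[ℂ] H) = ⊥ := by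
      rw [LinearMap.ker_eq_bot']
      intro y hy
      obtain ⟨x, hx⟩ := hmuSurj y
      rw [← hx] at hy
      rw [ContinuousLinearMap.coe_coe, hCx x] at hy
      have hx0 : (x : H) = 0 := hinj x hy
      have : x = (0 : At.domain) := Subtype.ext hx0
      rw [← hx, this]
      simp
    have hrange : LinearMap.range (C : H →ₗ[ℂ] H) = ⊤ := by
      rw [LinearMap.range_eq_top]
      intro z
      obtain ⟨x, hx⟩ := hsurj z
      exact ⟨At x - mu • B (x : H), by rw [ContinuousLinearMap.coe_coe, hCx x, hx]⟩
    set e := ContinuousLinearEquiv.ofBijective C hker hrange with hedef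
    refine ⟨Rmu.comp (e.symm : H →L[ℂ] H), ?_, hsurj⟩
    intro x
    have h1 : e.symm (At x - lam • B (x : H)) = At x - mu • B (x : H) := by
      rw [← hCx x]
      exact ContinuousLinearEquiv.ofBijective_symm_apply_apply C hker hrange _
    rw [ContinuousLinearMap.comp_apply, ContinuousLinearEquiv.coe_coe, h1]
    exact hRmu x
  · rintro ⟨R, hR, hRsurj⟩
    refine ⟨((Bh.comp R).comp J).comp Bh, ?_, ?_⟩
    · intro x u hu
      have := hkey x u hu
      simp only [ContinuousLinearMap.comp_apply]
      rw [this, hR x]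
    · intro yt
      obtain ⟨x, hx⟩ := hRsurj (Bh (J yt))
      refine ⟨x, J yt + lam • J (Bh (x : H)), ?_, ?_⟩
      · rw [map_add, map_smul, ← hJBh' (Bh (x : H)), ← hBapp]
        have : At x = Bh (J yt) + lam • B (x : H) := by
          rw [← hx]; abel
        rw [← this]
      · rw [map_add, map_smul, hJ2', hJ2', add_sub_cancel_right]
end

section
/- In the setting of Section 3: the approximate point spectrum of S̃ is contained in the approximate point spectrum of L̃, i.e. if there is a sequence xₙ ∈ D(S̃) with ‖|B|^{1/2}xₙ‖ = 1 and (J|B|^{-1/2}Ã − λ|B|^{1/2})xₙ → 0, then there is a normalized sequence x̂ₙ ∈ D(Ã), ‖x̂ₙ‖ = 1, with (Ã − λB)x̂ₙ → 0. -/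
open scoped InnerProductSpace
open Filter Topology

/-- In the setting of Section 3, `σ_ap(S̃) ⊆ σ_ap(L̃)`: if `xₙ ∈ D(S̃)`
(with `Bh uₙ = Ã xₙ`) satisfies `‖Bh xₙ‖ = 1` (unit `K`-norm) and
`(J Bh⁻¹ Ã − λ)xₙ → 0` in `K`, i.e. `J uₙ − λ • Bh xₙ → 0` in `H`, then there is a
normalized sequence `x̂ₙ ∈ D(Ã)`, `‖x̂ₙ‖ = 1`, with `(Ã − λB)x̂ₙ → 0`. -/
theorem approx_spectrum_reduction_subset_pencil
    {H : Type*} [NormedAddCommGroup H] [InnerProductSpace ℂ H] [CompleteSpace H]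
    (At : H →ₗ.[ℂ] H) (hAdense : Dense (At.domain : Set H)) (hAclosed : At.IsClosed)
    (hAsa : At.adjoint = At)
    (Bh J : H →L[ℂ] H)
    (hBh : IsSelfAdjoint Bh) (hBhpos : ∀ x : H, 0 ≤ (⟪Bh x, x⟫_ℂ).re)
    (hBhinj : Function.Injective Bh) (hBhrange : Dense (Set.range Bh))
    (hJ : IsSelfAdjoint J) (hJ2 : J.comp J = ContinuousLinearMap.id ℂ H)
    (hJBh : J.comp Bh = Bh.comp J)
    (hB : IsSelfAdjoint (J.comp (Bh.comp Bh))) :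
    ∀ (lam : ℂ) (x : ℕ → At.domain) (u : ℕ → H),
      (∀ n, Bh (u n) = At (x n)) →
      (∀ n, ‖Bh ((x n : H))‖ = 1) →
      Tendsto (fun n => J (u n) - lam • Bh ((x n : H))) atTop (nhds 0) →
      ∃ y : ℕ → At.domain, (∀ n, ‖(y n : H)‖ = 1) ∧
        Tendsto (fun n => At (y n) - lam • (J.comp (Bh.comp Bh)) ((y n : H)))
          atTop (nhds 0) := by
  intro lam x u hu hnorm htend
  -- basic norm bounds
  have h1 : ∀ n, (1 : ℝ) ≤ ‖Bh‖ * ‖(x n : H)‖ := fun n => by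
    rw [← hnorm n]; exact Bh.le_opNorm _
  have hxpos : ∀ n, 0 < ‖(x n : H)‖ := fun n => by
    by_contra h
    push_neg at h
    have h0 : ‖(x n : H)‖ = 0 := le_antisymm h (norm_nonneg _)
    have h2 := h1 n
    rw [h0, mul_zero] at h2
    linarith
  have hinvle : ∀ n, ‖(x n : H)‖⁻¹ ≤ ‖Bh‖ := fun n => by
    rw [inv_le_iff_one_le_mul₀' (hxpos n), mul_comm]
    exact h1 n
  -- normalized sequence
  set y : ℕ → At.domain := fun n => ((‖(x n : H)‖⁻¹ : ℂ)) • x n with hy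
  refine ⟨y, ?_, ?_⟩
  · intro n
    have : ((y n : H)) = (‖(x n : H)‖⁻¹ : ℂ) • (x n : H) := rfl
    rw [this, norm_smul]
    simp [Complex.norm_real, abs_of_pos (inv_pos.mpr (hxpos n)),
      inv_mul_cancel₀ (ne_of_gt (hxpos n))]
  · -- key identity: At x - lam • JBB x = (Bh ∘ J) (J u - lam • Bh x)
    have key : ∀ n, At (x n) - lam • (J.comp (Bh.comp Bh)) ((x n : H))
        = Bh (J (J (u n) - lam • Bh ((x n : H)))) := by
      intro n
      have hJJ : ∀ v : H, J (J v) = v := fun v =>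
        congrFun (congrArg DFunLike.coe hJ2) v
      have hJB : ∀ v : H, J (Bh v) = Bh (J v) := fun v =>
        congrFun (congrArg DFunLike.coe hJBh) v
      simp only [ContinuousLinearMap.comp_apply, map_sub, map_smul]
      rw [hJJ, ← hu n, hJB]
    have hz : Tendsto (fun n => Bh (J (J (u n) - lam • Bh ((x n : H)))))
        atTop (nhds 0) := by
      have := ((Bh.comp J).continuous.tendsto 0).comp htend
      simpa [Function.comp_def] using this
    -- scaled version
    have heq : ∀ n, At (y n) - lam • (J.comp (Bh.comp Bh)) ((y n : H))
        = (‖(x n : H)‖⁻¹ : ℂ) • (At (x n) - lam • (J.comp (Bh.comp Bh)) ((x n : H))) := by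
      intro n
      have hyc : ((y n : H)) = (‖(x n : H)‖⁻¹ : ℂ) • (x n : H) := rfl
      rw [At.map_smul, hyc, map_smul, smul_sub, smul_comm lam]
    rw [tendsto_zero_iff_norm_tendsto_zero]
    have hbound : ∀ n, ‖At (y n) - lam • (J.comp (Bh.comp Bh)) ((y n : H))‖
        ≤ ‖Bh‖ * ‖Bh (J (J (u n) - lam • Bh ((x n : H))))‖ := by
      intro n
      rw [heq n, key n, norm_smul]
      gcongr
      simpa using hinvle n
    refine squeeze_zero (fun n => norm_nonneg _) hbound ?_
    have := (tendsto_zero_iff_norm_tendsto_zero.mp hz).const_mul ‖Bh‖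
    simpa using this
end

section
/- In the setting of Section 3: if λ ∈ σ_c(S̃) (the range R(S̃ − λ) is dense in K but λ is not an eigenvalue), then R(Ã − λB) is dense in H and λ is not an eigenvalue of L̃; hence σ_c(S̃) ⊆ σ_c(L̃), and consequently σ_r(L̃) ⊆ σ_r(S̃). -/
open scoped InnerProductSpace

/-- In the setting of Section 3, if `λ ∈ σ_c(S̃)` (the range of
`S̃ − λ` is dense in `K` and `λ` is not an eigenvalue of `S̃`), then `R(Ã − λB)` is
dense in `H` and `λ` is not an eigenvalue of `L̃`; hence `σ_c(S̃) ⊆ σ_c(L̃)` and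
consequently `σ_r(L̃) ⊆ σ_r(S̃)`. -/
theorem continuous_spectrum_reduction_subset_pencil
    {H : Type*} [NormedAddCommGroup H] [InnerProductSpace ℂ H] [CompleteSpace H]
    (At : H →ₗ.[ℂ] H) (hAdense : Dense (At.domain : Set H)) (hAclosed : At.IsClosed)
    (hAsa : At.adjoint = At)
    (Bh J : H →L[ℂ] H)
    (hBh : IsSelfAdjoint Bh) (hBhpos : ∀ x : H, 0 ≤ (⟪Bh x, x⟫_ℂ).re)
    (hBhinj : Function.Injective Bh) (hBhrange : Dense (Set.range Bh))
    (hJ : IsSelfAdjoint J) (hJ2 : J.comp J = ContinuousLinearMap.id ℂ H)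
    (hJBh : J.comp Bh = Bh.comp J)
    (hB : IsSelfAdjoint (J.comp (Bh.comp Bh))) :
    ∀ lam : ℂ,
      -- `R(S̃ − λ)` is dense in `K` (in `T`-coordinates):
      (∀ (yt : H) (ε : ℝ), 0 < ε → ∃ (x : At.domain) (u : H), Bh u = At x ∧
        ‖(J u - lam • Bh (x : H)) - yt‖ < ε) →
      -- `λ` is not an eigenvalue of `S̃`:
      (¬ ∃ (x : At.domain) (u : H), (x : H) ≠ 0 ∧ Bh u = At x ∧
        J u = lam • Bh (x : H)) →
      -- then `R(Ã − λB)` is dense in `H` and `λ` is not an eigenvalue of `L̃`: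
      (∀ (y : H) (ε : ℝ), 0 < ε → ∃ x : At.domain,
        ‖(At x - lam • (J.comp (Bh.comp Bh)) (x : H)) - y‖ < ε) ∧
      (¬ ∃ x : At.domain, (x : H) ≠ 0 ∧
        At x = lam • (J.comp (Bh.comp Bh)) (x : H)) := by
  intro lam hdense heig
  have hJJ : ∀ w : H, J (J w) = w := by
    intro w
    have := ContinuousLinearMap.ext_iff.mp hJ2 w
    simpa using this
  have hJBh' : ∀ w : H, J (Bh w) = Bh (J w) := by
    intro w
    have := ContinuousLinearMap.ext_iff.mp hJBh w
    simpa using this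
  constructor
  · intro y ε hε
    -- find v in range of Bh close to y
    have hy : y ∈ closure (Set.range Bh) := hBhrange y
    rw [Metric.mem_closure_iff] at hy
    obtain ⟨w, ⟨z, hz⟩, hwy⟩ := hy (ε / 2) (by linarith)
    set C := ‖Bh.comp J‖ with hC
    have hCpos : (0:ℝ) < C + 1 := by positivity
    have hε' : 0 < ε / (2 * (C + 1)) := by positivity
    obtain ⟨x, u, hBu, hclose⟩ := hdense (J z) (ε / (2 * (C + 1))) hε'
    refine ⟨x, ?_⟩
    have key : At x - lam • (J.comp (Bh.comp Bh)) (x : H)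
        = (Bh.comp J) ((J u - lam • Bh (x : H)) - J z) + Bh z := by
      simp only [ContinuousLinearMap.comp_apply, map_sub, map_smul]
      rw [← hBu, hJJ u, hJJ z]
      rw [← hJBh' (Bh (x : H))]
      abel
    rw [key]
    have hb1 : ‖(Bh.comp J) ((J u - lam • Bh (x : H)) - J z)‖
        ≤ C * (ε / (2 * (C + 1))) := by
      calc ‖(Bh.comp J) ((J u - lam • Bh (x : H)) - J z)‖
          ≤ C * ‖(J u - lam • Bh (x : H)) - J z‖ := (Bh.comp J).le_opNorm _
        _ ≤ C * (ε / (2 * (C + 1))) := by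
            apply mul_le_mul_of_nonneg_left (le_of_lt hclose) (norm_nonneg _)
    have hb1' : C * (ε / (2 * (C + 1))) < ε / 2 := by
      have heq : C * (ε / (2 * (C + 1))) = (C * ε) / (2 * (C + 1)) := by ring
      rw [heq, div_lt_iff₀ (by positivity)]
      nlinarith [norm_nonneg (Bh.comp J)]
    have hb2 : ‖Bh z - y‖ < ε / 2 := by
      rw [← dist_eq_norm, hz, dist_comm]
      exact hwy
    calc ‖(Bh.comp J) ((J u - lam • Bh (x : H)) - J z) + Bh z - y‖
        ≤ ‖(Bh.comp J) ((J u - lam • Bh (x : H)) - J z)‖ + ‖Bh z - y‖ := by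
          have := norm_add_le ((Bh.comp J) ((J u - lam • Bh (x : H)) - J z)) (Bh z - y)
          simpa [add_sub_assoc] using this
      _ < ε / 2 + ε / 2 := by
          apply add_lt_add_of_le_of_lt (le_trans hb1 (le_of_lt hb1')) hb2
      _ = ε := by ring
  · rintro ⟨x, hx0, hx⟩
    apply heig
    refine ⟨x, lam • J (Bh (x : H)), hx0, ?_, ?_⟩
    · rw [hx]
      simp only [map_smul, ContinuousLinearMap.comp_apply]
      rw [hJBh' (Bh (x : H))]
    · simp only [map_smul]
      rw [hJJ (Bh (x : H))]
end
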